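/- Let K be a number field of degree [K:ℚ] ≥ 2, with unit rank r_K, and let r_0 be the maximum of the unit ranks of the proper subfields of K. Then r_K = r_0 if and only if K is a CM field. -/

import Mathlib

open NumberField NumberField.InfinitePlace Module


/-- A CM field is a totally imaginary quadratic extension of a totally real field:
`K` has no real embeddings and contains a subfield `K₀` all of whose complex embeddings
are real such that `[K : K₀] = 2`. -/
def IsCMField (K : Type*) [Field K] : Prop :=
  (∀ φ : K →+* ℂ, ¬ NumberField.ComplexEmbedding.IsReal φ) ∧
  ∃ K₀ : Subfield K, (∀ φ : K₀ →+* ℂ, NumberField.ComplexEmbedding.IsReal φ) ∧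
    Module.finrank K₀ K = 2

/-- The maximum of the unit ranks of the proper subfields of a number field `K`.
(In characteristic zero every subfield of `K` contains `ℚ`, so proper subfields are
the intermediate fields of `K/ℚ` other than `K` itself.) -/
noncomputable def maxProperSubfieldUnitRank (K : Type*) [Field K] [NumberField K] : ℕ :=
  sSup {n : ℕ | ∃ K₀ : IntermediateField ℚ K, K₀ ≠ ⊤ ∧ n = NumberField.Units.rank K₀}

section Aux
variable {K : Type*} [Field K] [NumberField K]

lemma cm_aux_exists_two_ext (K₀ : IntermediateField ℚ K) (ψ : K₀ →+* ℂ)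
    (h2 : 2 ≤ finrank K₀ K) :
    ∃ φ₁ φ₂ : K →+* ℂ, φ₁ ≠ φ₂ ∧ φ₁.comp (algebraMap K₀ K) = ψ ∧
      φ₂.comp (algebraMap K₀ K) = ψ := by
  letI : Algebra K₀ ℂ := ψ.toAlgebra
  have hcard : Fintype.card (K →ₐ[K₀] ℂ) = finrank K₀ K := AlgHom.card (F := K₀) (E := K) ℂ
  obtain ⟨e₁, e₂, hne⟩ := Fintype.exists_pair_of_one_lt_card (α := K →ₐ[K₀] ℂ) (by omega)
  exact ⟨e₁, e₂, fun h => hne (AlgHom.coe_ringHom_injective h),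
    e₁.comp_algebraMap, e₂.comp_algebraMap⟩

lemma cm_aux_exists_ext (K₀ : IntermediateField ℚ K) (ψ : K₀ →+* ℂ) :
    ∃ φ : K →+* ℂ, φ.comp (algebraMap K₀ K) = ψ := by
  letI : Algebra K₀ ℂ := ψ.toAlgebra
  have hcard : Fintype.card (K →ₐ[K₀] ℂ) = finrank K₀ K := AlgHom.card (F := K₀) (E := K) ℂ
  have : 0 < Fintype.card (K →ₐ[K₀] ℂ) := by rw [hcard]; exact finrank_pos
  obtain ⟨e⟩ := Fintype.card_pos_iff.mp this
  exact ⟨e, e.comp_algebraMap⟩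

lemma cm_aux_finrank_le_two (K₀ : IntermediateField ℚ K) (ψ : K₀ →+* ℂ)
    (h : ∀ φ φ' : K →+* ℂ, φ.comp (algebraMap K₀ K) = ψ →
      φ'.comp (algebraMap K₀ K) = ψ → mk φ = mk φ') :
    finrank K₀ K ≤ 2 := by
  classical
  letI : Algebra K₀ ℂ := ψ.toAlgebra
  have hcard : Fintype.card (K →ₐ[K₀] ℂ) = finrank K₀ K := AlgHom.card (F := K₀) (E := K) ℂ
  rw [← hcard]
  obtain ⟨φ₀, hφ₀⟩ := cm_aux_exists_ext K₀ ψ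
  have key : ∀ e : K →ₐ[K₀] ℂ, (e : K →+* ℂ) = φ₀ ∨
      (e : K →+* ℂ) = ComplexEmbedding.conjugate φ₀ := by
    intro e
    rcases mk_eq_iff.mp (h φ₀ e hφ₀ e.comp_algebraMap) with h1 | h1
    · exact Or.inl h1.symm
    · exact Or.inr h1.symm
  have hinj : Function.Injective (fun e : K →ₐ[K₀] ℂ =>
      (if (e : K →+* ℂ) = φ₀ then 0 else 1 : Fin 2)) := by
    intro e e' hee'
    apply AlgHom.coe_ringHom_injective
    by_cases h1 : (e : K →+* ℂ) = φ₀ <;> by_cases h2 : (e' : K →+* ℂ) = φ₀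
    · rw [h1, h2]
    · simp [h1, h2] at hee'
    · simp [h1, h2] at hee'
    · rw [(key e).resolve_left h1, (key e').resolve_left h2]
  simpa using Fintype.card_le_of_injective _ hinj

lemma cm_aux_rank_le (K₀ : IntermediateField ℚ K) :
    Units.rank K₀ ≤ Units.rank K :=
  Nat.sub_le_sub_right (card_mono (↥K₀) K) 1

/-- Forward direction: a proper intermediate field of equal unit rank forces `K` to be CM. -/
lemma cm_aux_isCM_of_rank_eq (K₀ : IntermediateField ℚ K) (hne : K₀ ≠ ⊤)
    (hr : Units.rank K₀ = Units.rank K) : _root_.IsCMField K := by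
  have hcard_le : Fintype.card (InfinitePlace K₀) ≤ Fintype.card (InfinitePlace K) :=
    card_mono (↥K₀) K
  have h1 : 0 < Fintype.card (InfinitePlace K₀) := Fintype.card_pos
  have h2 : 0 < Fintype.card (InfinitePlace K) := Fintype.card_pos
  have hcard : Fintype.card (InfinitePlace K₀) = Fintype.card (InfinitePlace K) := by
    unfold Units.rank at hr; omega
  have hinj : Function.Injective (fun w : InfinitePlace K => w.comap (algebraMap K₀ K)) :=
    ((Fintype.bijective_iff_surjective_and_card _).mpr
      ⟨comap_surjective, hcard.symm⟩).injective
  -- key consequence of injectivity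
  have hsame : ∀ (ψ : K₀ →+* ℂ) (φ φ' : K →+* ℂ), φ.comp (algebraMap K₀ K) = ψ →
      φ'.comp (algebraMap K₀ K) = ψ → mk φ = mk φ' := by
    intro ψ φ φ' hφ hφ'
    apply hinj
    show (mk φ).comap _ = (mk φ').comap _
    rw [comap_mk, comap_mk, hφ, hφ']
  -- [K : K₀] ≥ 2
  have hm2 : 2 ≤ finrank K₀ K := by
    by_contra hlt
    push_neg at hlt
    have hpos : 0 < finrank K₀ K := finrank_pos
    have h1' : finrank K₀ K = 1 := by omega
    exact hne (IntermediateField.eq_of_le_of_finrank_le' le_top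
      (by rw [IntermediateField.finrank_top, h1']))
  -- K₀ is totally real
  have hconjcomp : ∀ (φ : K →+* ℂ), (ComplexEmbedding.conjugate φ).comp (algebraMap K₀ K)
      = ComplexEmbedding.conjugate (φ.comp (algebraMap K₀ K)) := fun φ => rfl
  have htreal : ∀ ψ : K₀ →+* ℂ, ComplexEmbedding.IsReal ψ := by
    intro ψ
    obtain ⟨φ₁, φ₂, h12, hc1, hc2⟩ := cm_aux_exists_two_ext K₀ ψ hm2
    have e12 : mk φ₁ = mk φ₂ := hsame ψ φ₁ φ₂ hc1 hc2
    have hφ₂ : φ₂ = ComplexEmbedding.conjugate φ₁ :=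
      ((mk_eq_iff.mp e12).resolve_left h12).symm
    rw [ComplexEmbedding.isReal_iff]
    rw [hφ₂, hconjcomp, hc1] at hc2
    exact hc2
  -- [K : K₀] ≤ 2
  have hm2' : finrank K₀ K = 2 := by
    obtain ⟨w⟩ : Nonempty (InfinitePlace K₀) := inferInstance
    have hle := cm_aux_finrank_le_two K₀ w.embedding (hsame w.embedding)
    omega
  -- K is totally imaginary
  have himag : ∀ φ : K →+* ℂ, ¬ ComplexEmbedding.IsReal φ := by
    intro φ hφ
    obtain ⟨φ₁, φ₂, h12, hc1, hc2⟩ :=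
      cm_aux_exists_two_ext K₀ (φ.comp (algebraMap K₀ K)) hm2
    have e1 : mk φ = mk φ₁ := hsame _ φ φ₁ rfl hc1
    have e2 : mk φ = mk φ₂ := hsame _ φ φ₂ rfl hc2
    have hconj : ComplexEmbedding.conjugate φ = φ := ComplexEmbedding.isReal_iff.mp hφ
    have hφ₁ : φ₁ = φ := by
      rcases mk_eq_iff.mp e1 with h | h
      · exact h.symm
      · rw [hconj] at h; exact h.symm
    have hφ₂ : φ₂ = φ := by
      rcases mk_eq_iff.mp e2 with h | h
      · exact h.symm
      · rw [hconj] at h; exact h.symm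
    exact h12 (hφ₁.trans hφ₂.symm)
  exact ⟨himag, K₀.toSubfield, htreal, hm2'⟩

end Aux

/-- For a number field `K` of degree at least `2`, the unit rank of `K` equals the maximum
of the unit ranks of the proper subfields of `K` if and only if `K` is a CM field. -/
theorem unitRank_eq_maxProperSubfieldUnitRank_iff_isCMField
    (K : Type*) [Field K] [NumberField K] (hd : 2 ≤ Module.finrank ℚ K) :
    NumberField.Units.rank K = maxProperSubfieldUnitRank K ↔ _root_.IsCMField K := by
  have hbdd : BddAbove {n : ℕ | ∃ K₀ : IntermediateField ℚ K, K₀ ≠ ⊤ ∧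
      n = NumberField.Units.rank K₀} := by
    refine ⟨Units.rank K, ?_⟩
    rintro n ⟨F, -, rfl⟩
    exact cm_aux_rank_le F
  rw [maxProperSubfieldUnitRank]
  constructor
  · intro h
    have hbot : (⊥ : IntermediateField ℚ K) ≠ ⊤ := by
      intro hbt
      have h1 := IntermediateField.finrank_bot (F := ℚ) (E := K)
      rw [hbt, IntermediateField.finrank_top'] at h1
      omega
    have hne : {n : ℕ | ∃ K₀ : IntermediateField ℚ K, K₀ ≠ ⊤ ∧
        n = NumberField.Units.rank K₀}.Nonempty :=
      ⟨Units.rank (⊥ : IntermediateField ℚ K), ⊥, hbot, rfl⟩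
    obtain ⟨K₀, hK₀, hrk⟩ := Nat.sSup_mem hne hbdd
    refine cm_aux_isCM_of_rank_eq K₀ hK₀ ?_
    rw [← hrk]
    exact h.symm
  · rintro ⟨himag, K₀s, hreal, hfr⟩
    have hratmem : ∀ q : ℚ, algebraMap ℚ K q ∈ K₀s := fun q => by
      rw [eq_ratCast]; exact SubfieldClass.ratCast_mem K₀s q
    set E : IntermediateField ℚ K := Subfield.toIntermediateField K₀s hratmem with hE
    have hfrE : finrank E K = 2 := hfr
    have hEne : E ≠ ⊤ := by
      intro htop
      rw [htop, IntermediateField.finrank_top] at hfrE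
      omega
    have hWK : ∀ w : InfinitePlace K, ¬ IsReal w := fun w hw =>
      himag w.embedding (isReal_iff.mp hw)
    have hcK : 2 * Fintype.card (InfinitePlace K) = finrank ℚ K := by
      rw [← sum_mult_eq]
      rw [Finset.sum_congr rfl (fun w _ => by rw [mult, if_neg (hWK w)])]
      simp [Finset.sum_const, mul_comm]
    have hWE : ∀ w : InfinitePlace E, IsReal w := fun w =>
      isReal_iff.mpr (hreal w.embedding)
    have hcE : Fintype.card (InfinitePlace E) = finrank ℚ E := by
      rw [← sum_mult_eq]
      rw [Finset.sum_congr rfl (fun w _ => by rw [mult, if_pos (hWE w)])]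
      simp
    have htower : finrank ℚ E * finrank E K = finrank ℚ K :=
      Module.finrank_mul_finrank ℚ (↥E) K
    rw [hfrE] at htower
    have hcards : Fintype.card (InfinitePlace E) = Fintype.card (InfinitePlace K) := by
      omega
    have hrEK : Units.rank E = Units.rank K := by
      unfold Units.rank
      rw [hcards]
    apply le_antisymm
    · exact le_csSup hbdd ⟨E, hEne, hrEK.symm⟩
    · exact csSup_le ⟨Units.rank E, E, hEne, rfl⟩
        (by rintro n ⟨F, -, rfl⟩; exact cm_aux_rank_le F)
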